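/- Suppose A has the IM property on I and the following equivalence holds: there is an infinite subinterval J of I on which A has the nontrivial IM property if and only if there is an infinite subinterval J of I with λ_J(A) > 0. -/

import Mathlib

open Filter Set MeasureTheory

/-- The hypernatural numbers: the ultrapower of `ℕ` by the hyperfilter. -/
abbrev SN : Type := Filter.Germ (Filter.hyperfilter ℕ : Filter ℕ) ℕ

/-- Membership of a hypernatural in the internal set determined by a sequence of sets. -/
def memF (F : ℕ → Set ℕ) (x : SN) : Prop :=
  x.liftOn (fun f => ∀ᶠ i in (Filter.hyperfilter ℕ : Filter ℕ), f i ∈ F i)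
    (by
      intro f g h
      exact propext (eventually_congr (h.mono fun i hi => by rw [hi])))

/-- A set of hypernaturals is internal if it is determined by a sequence of subsets of `ℕ`. -/
def InternalSet (A : Set SN) : Prop := ∃ F : ℕ → Set ℕ, A = {x | memF F x}

/-- The nonstandard extension `*A ⊆ *ℕ` of a set `A ⊆ ℕ`. -/
def starN (A : Set ℕ) : Set SN := {x | memF (fun _ => A) x}

/-- The canonical map from the hypernaturals to the hyperreals. -/
noncomputable def toR (x : SN) : Hyperreal := Filter.Germ.map (fun n : ℕ => (n : ℝ)) x

/-- `[y,z]` is an infinite (hyperfinite) interval. -/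
def InfInterval (y z : SN) : Prop := ∀ n : ℕ, y + (n : SN) < z

/-- The map `st_I : I → [0,1]`, `st_I(a) = st((a-y)/(z-y))`. -/
noncomputable def stI (y z : SN) (x : SN) : ℝ :=
  Hyperreal.st ((toR x - toR y) / (toR z - toR y))

/-- `λ_I(A)`: Lebesgue measure of the standard part image of `A ∩ I`, `I = [y,z]`. -/
noncomputable def lam (A : Set SN) (y z : SN) : ℝ :=
  (volume (stI y z '' (A ∩ Set.Icc y z))).toReal

/-- `g_A(I)`: the normalized length of the largest gap of `A` on `I = [y,z]`. -/
noncomputable def gap (A : Set SN) (y z : SN) : ℝ :=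
  sSup {r : ℝ | 0 ≤ r ∧ ∃ c d : SN, c ∈ Set.Icc y z ∧ d ∈ Set.Icc y z ∧ c ≤ d ∧
    Set.Icc c d ∩ A = ∅ ∧ (r : Hyperreal) ≤ (toR d - toR c) / (toR z - toR y)}

/-- `A` has the interval-measure (IM) property on `I = [y,z]`. -/
def IMOn (A : Set SN) (y z : SN) : Prop :=
  ∀ ε : ℝ, 0 < ε → ∃ δ : ℝ, 0 < δ ∧ ∀ c d : SN, y ≤ c → c ≤ d → d ≤ z →
    InfInterval c d → gap A c d ≤ δ → 1 - ε ≤ lam A c d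

/-- `A` has the enhanced IM property on `I = [y,z]`. -/
def EnhancedIMOn (A : Set SN) (y z : SN) : Prop := IMOn A y z ∧ 0 < lam A y z

/-- `A ⊆ ℕ` has the standard interval-measure (SIM) property. -/
def SIM (A : Set ℕ) : Prop :=
  (∀ y z : SN, InfInterval y z → IMOn (starN A) y z) ∧
  ∃ y z : SN, InfInterval y z ∧ EnhancedIMOn (starN A) y z

/-- `A ⊆ ℕ` is supra-SIM if it contains a SIM set. -/
def SupraSIM (A : Set ℕ) : Prop := ∃ B ⊆ A, SIM B

/-- `A` has the nontrivial IM property on `[y,z]`: it has the IM property and there are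
infinite subintervals with arbitrarily small normalized largest gap. -/
def NontrivialIMOn (A : Set SN) (y z : SN) : Prop :=
  IMOn A y z ∧ ∀ δ : ℝ, 0 < δ →
    ∃ c d : SN, y ≤ c ∧ c ≤ d ∧ d ≤ z ∧ InfInterval c d ∧ gap A c d ≤ δ

abbrev RG : Type := Filter.Germ (Filter.hyperfilter ℕ : Filter ℕ) ℝ

section
variable {u v : SN}

lemma toR_coe (f : ℕ → ℕ) : toR (↑f : SN) = ((↑(fun i => (f i : ℝ)) : RG) : ℝ*) := rfl

lemma toR_le : toR u ≤ toR v ↔ u ≤ v := by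
  induction u using Filter.Germ.inductionOn with | h f =>
  induction v using Filter.Germ.inductionOn with | h g =>
  rw [toR_coe, toR_coe]
  show ((↑(fun i => (f i : ℝ)) : RG) ≤ ↑(fun i => (g i : ℝ))) ↔ (↑f : SN) ≤ ↑g
  rw [Filter.Germ.coe_le, Filter.Germ.coe_le]
  exact eventually_congr (Filter.Eventually.of_forall fun i => Nat.cast_le)

lemma toR_lt : toR u < toR v ↔ u < v := by
  constructor
  · intro h; by_contra h'; exact absurd (toR_le.2 (not_lt.1 h')) (not_le.2 h)
  · intro h; by_contra h'; exact absurd (toR_le.1 (not_lt.1 h')) (not_le.2 h)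

lemma toR_add : toR (u + v) = toR u + toR v := by
  induction u using Filter.Germ.inductionOn with | h f =>
  induction v using Filter.Germ.inductionOn with | h g =>
  show toR ↑(fun i => f i + g i) = _
  rw [toR_coe, toR_coe, toR_coe]
  show _ = ((↑(fun i => (f i : ℝ) + (g i : ℝ)) : RG) : ℝ*)
  norm_cast

lemma toR_natCast (n : ℕ) : toR (n : SN) = ((n : ℝ) : ℝ*) := rfl

lemma toR_nonneg : 0 ≤ toR u := by
  induction u using Filter.Germ.inductionOn with | h f =>
  have h : ((↑(fun _ : ℕ => (0:ℝ)) : RG)) ≤ (↑(fun i => (f i : ℝ)) : RG) :=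
    by rw [Filter.Germ.coe_le]; exact Filter.Eventually.of_forall fun i => Nat.cast_nonneg _
  rw [toR_coe]
  exact h
end


section
variable {y z u v : SN}

lemma infinitePos_of_inf (hI : InfInterval y z) : Hyperreal.InfinitePos (toR z - toR y) := by
  intro s
  obtain ⟨n, hn⟩ := exists_nat_ge s
  have h1 : toR (y + (n : SN)) < toR z := toR_lt.2 (hI n)
  rw [toR_add, toR_natCast] at h1
  have h2 : (s : ℝ*) ≤ ((n : ℝ) : ℝ*) := by exact_mod_cast hn
  calc (s : ℝ*) ≤ ((n:ℝ) : ℝ*) := h2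
    _ < toR z - toR y := by linarith

lemma sub_pos_of_inf (hI : InfInterval y z) : 0 < toR z - toR y :=
  (infinitePos_of_inf hI).pos

lemma not_infinite_of_mem01 {x : ℝ*} (h0 : 0 ≤ x) (h1 : x ≤ 1) : ¬ x.Infinite := by
  rintro (hp | hn)
  · have := hp 2
    have : ((2:ℝ) : ℝ*) ≤ 1 := le_trans (le_of_lt this) h1
    norm_num at this
  · have := hn 0
    have : (0:ℝ*) < 0 := lt_of_le_of_lt h0 (by exact_mod_cast this)
    exact lt_irrefl _ this

lemma ratio_mem01 (hI : InfInterval y z) (h1 : y ≤ u) (h2 : u ≤ z) :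
    0 ≤ (toR u - toR y) / (toR z - toR y) ∧ (toR u - toR y) / (toR z - toR y) ≤ 1 := by
  have hd := sub_pos_of_inf hI
  constructor
  · exact div_nonneg (by have := toR_le.2 h1; linarith) hd.le
  · rw [div_le_one hd]
    have := toR_le.2 h2; linarith

lemma isSt_stI (hI : InfInterval y z) (h1 : y ≤ u) (h2 : u ≤ z) :
    Hyperreal.IsSt ((toR u - toR y) / (toR z - toR y)) (stI y z u) := by
  obtain ⟨ha, hb⟩ := ratio_mem01 hI h1 h2
  exact Hyperreal.isSt_st' (not_infinite_of_mem01 ha hb)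

lemma stI_mem01 (hI : InfInterval y z) (h1 : y ≤ u) (h2 : u ≤ z) :
    stI y z u ∈ Set.Icc (0:ℝ) 1 := by
  obtain ⟨ha, hb⟩ := ratio_mem01 hI h1 h2
  have h := isSt_stI hI h1 h2
  constructor
  · exact (Hyperreal.isSt_refl_real 0).le h (by exact_mod_cast ha)
  · exact h.le (Hyperreal.isSt_refl_real 1) (by exact_mod_cast hb)

lemma stI_mono (hI : InfInterval y z) (h1 : y ≤ u) (huv : u ≤ v) (h2 : v ≤ z) :
    stI y z u ≤ stI y z v := by
  have hu := isSt_stI hI h1 (le_trans huv h2)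
  have hv := isSt_stI hI (le_trans h1 huv) h2
  refine hu.le hv ?_
  have hd := sub_pos_of_inf hI
  have := toR_le.2 huv
  gcongr


end

section
variable {y z u v : SN}

lemma lt_of_stI_lt (hI : InfInterval y z) (h1 : y ≤ u) (h2 : u ≤ z) (h3 : y ≤ v) (h4 : v ≤ z)
    (h : stI y z u < stI y z v) : u < v := by
  by_contra h'
  exact absurd (stI_mono hI h3 (not_lt.1 h') h2) (not_le.2 h)

end

noncomputable def pt (f g : ℕ → ℕ) (p : ℝ) : ℕ → ℕ :=
  fun i => f i + ⌊p * ((g i - f i : ℕ) : ℝ)⌋₊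

section
variable {f g : ℕ → ℕ} {p q : ℝ}

lemma inf_ev (hInf : InfInterval (↑f : SN) ↑g) (n : ℕ) :
    ∀ᶠ i in (Filter.hyperfilter ℕ : Filter ℕ), f i + n < g i := by
  have h := hInf n
  change ((↑(fun i => f i + n) : SN) < ↑g) at h
  exact Filter.Germ.coe_lt.1 h

lemma ev_le (hInf : InfInterval (↑f : SN) ↑g) :
    ∀ᶠ i in (Filter.hyperfilter ℕ : Filter ℕ), f i ≤ g i :=
  (inf_ev hInf 0).mono fun i h => by omega

lemma pt_ge : (↑f : SN) ≤ ↑(pt f g p) := by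
  rw [Filter.Germ.coe_le]
  exact Filter.Eventually.of_forall fun i => Nat.le_add_right _ _

lemma pt_mono (hpq : p ≤ q) : (↑(pt f g p) : SN) ≤ ↑(pt f g q) := by
  rw [Filter.Germ.coe_le]
  refine Filter.Eventually.of_forall fun i => ?_
  have : p * ((g i - f i : ℕ) : ℝ) ≤ q * ((g i - f i : ℕ) : ℝ) :=
    mul_le_mul_of_nonneg_right hpq (Nat.cast_nonneg _)
  exact Nat.add_le_add_left (Nat.floor_le_floor this) _

lemma pt_le (hInf : InfInterval (↑f : SN) ↑g) (hp1 : p ≤ 1) : (↑(pt f g p) : SN) ≤ ↑g := by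
  rw [Filter.Germ.coe_le]
  filter_upwards [ev_le hInf] with i hi
  have h1 : p * ((g i - f i : ℕ) : ℝ) ≤ ((g i - f i : ℕ) : ℝ) :=
    mul_le_of_le_one_left (Nat.cast_nonneg _) hp1
  have h2 : ⌊p * ((g i - f i : ℕ) : ℝ)⌋₊ ≤ g i - f i := by
    calc ⌊p * ((g i - f i : ℕ) : ℝ)⌋₊ ≤ ⌊((g i - f i : ℕ) : ℝ)⌋₊ := Nat.floor_le_floor h1
      _ = g i - f i := Nat.floor_natCast _
  show f i + _ ≤ g i
  omega

lemma floor_ratio_bounds {δ : ℝ} (hp0 : 0 ≤ p) (hδ : 0 < δ) {N : ℕ} (hN : 1/δ < N) :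
    p - δ < (⌊p*N⌋₊ : ℝ)/N ∧ ((⌊p*N⌋₊:ℝ))/N < p + δ := by
  have hN0 : (0:ℝ) < N := lt_of_le_of_lt (by positivity) hN
  have hfl : p*N - 1 < (⌊p*N⌋₊:ℝ) := Nat.sub_one_lt_floor _
  have hfu : (⌊p*N⌋₊:ℝ) ≤ p*N := Nat.floor_le (by positivity)
  have hδN : 1 < δ * N := by
    rw [div_lt_iff₀ hδ] at hN
    nlinarith
  constructor
  · rw [lt_div_iff₀ hN0]; nlinarith
  · rw [div_lt_iff₀ hN0]; nlinarith

lemma pt_isSt (hInf : InfInterval (↑f : SN) ↑g) (hp0 : 0 ≤ p) :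
    Hyperreal.IsSt ((toR ↑(pt f g p) - toR ↑f) / (toR ↑g - toR ↑f)) p := by
  intro δ hδ
  obtain ⟨n, hn⟩ := exists_nat_gt (1/δ)
  have hrw : (toR ↑(pt f g p) - toR ↑f) / (toR ↑g - toR ↑f)
      = ((↑(fun i => ((pt f g p i : ℝ) - (f i : ℝ)) / ((g i : ℝ) - (f i : ℝ))) : RG) : ℝ*) := rfl
  rw [hrw]
  have hev := (inf_ev hInf n).and (ev_le hInf)
  constructor
  · show ((↑(fun _ : ℕ => p - δ) : RG) : ℝ*) < _
    rw [Filter.Germ.coe_lt]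
    filter_upwards [hev] with i ⟨h1, h2⟩
    have hNn : 1/δ < ((g i - f i : ℕ) : ℝ) := by
      have : n < g i - f i := by omega
      calc (1:ℝ)/δ < n := hn
        _ ≤ _ := by exact_mod_cast this.le
    have := (floor_ratio_bounds hp0 hδ hNn).1
    show p - δ < ((pt f g p i : ℝ) - (f i : ℝ)) / ((g i : ℝ) - (f i : ℝ))
    have hc : ((g i : ℝ) - (f i : ℝ)) = ((g i - f i : ℕ) : ℝ) := by
      rw [Nat.cast_sub h2]
    have hc2 : (pt f g p i : ℝ) - (f i : ℝ) = (⌊p * ((g i - f i : ℕ) : ℝ)⌋₊ : ℝ) := by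
      show ((f i + ⌊p * ((g i - f i : ℕ) : ℝ)⌋₊ : ℕ) : ℝ) - (f i : ℝ) = _
      push_cast; ring
    rw [hc, hc2]; exact this
  · show _ < ((↑(fun _ : ℕ => p + δ) : RG) : ℝ*)
    rw [Filter.Germ.coe_lt]
    filter_upwards [hev] with i ⟨h1, h2⟩
    have hNn : 1/δ < ((g i - f i : ℕ) : ℝ) := by
      have : n < g i - f i := by omega
      calc (1:ℝ)/δ < n := hn
        _ ≤ _ := by exact_mod_cast this.le
    have := (floor_ratio_bounds hp0 hδ hNn).2
    show ((pt f g p i : ℝ) - (f i : ℝ)) / ((g i : ℝ) - (f i : ℝ)) < p + δ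
    have hc : ((g i : ℝ) - (f i : ℝ)) = ((g i - f i : ℕ) : ℝ) := by
      rw [Nat.cast_sub h2]
    have hc2 : (pt f g p i : ℝ) - (f i : ℝ) = (⌊p * ((g i - f i : ℕ) : ℝ)⌋₊ : ℝ) := by
      show ((f i + ⌊p * ((g i - f i : ℕ) : ℝ)⌋₊ : ℕ) : ℝ) - (f i : ℝ) = _
      push_cast; ring
    rw [hc, hc2]; exact this

lemma pt_inf (hInf : InfInterval (↑f : SN) ↑g) (hp0 : 0 ≤ p) (hpq : p < q) :
    InfInterval (↑(pt f g p) : SN) ↑(pt f g q) := by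
  intro n
  obtain ⟨m, hm⟩ := exists_nat_gt (((n:ℝ) + 2)/(q - p))
  have hq : 0 < q - p := by linarith
  show ((↑(pt f g p) : SN) + (n : SN)) < ↑(pt f g q)
  have hch : ((↑(pt f g p) : SN) + (n : SN)) = (↑(fun i => pt f g p i + n) : SN) := rfl
  rw [hch, Filter.Germ.coe_lt]
  filter_upwards [(inf_ev hInf m).and (ev_le hInf)] with i ⟨h1, h2⟩
  have hN : ((n:ℝ) + 2)/(q - p) < ((g i - f i : ℕ) : ℝ) := by
    have : m < g i - f i := by omega
    calc ((n:ℝ) + 2)/(q - p) < m := hm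
      _ ≤ _ := by exact_mod_cast this.le
  set N : ℝ := ((g i - f i : ℕ) : ℝ) with hNdef
  have hN0 : 0 ≤ N := Nat.cast_nonneg _
  have hkey : p * N + n + 1 < q * N := by
    rw [div_lt_iff₀ hq] at hN
    nlinarith
  have hfl : q*N - 1 < (⌊q*N⌋₊:ℝ) := Nat.sub_one_lt_floor _
  have hfu : (⌊p*N⌋₊:ℝ) ≤ p*N := Nat.floor_le (by positivity)
  show pt f g p i + n < pt f g q i
  show f i + ⌊p * N⌋₊ + n < f i + ⌊q * N⌋₊
  have : (⌊p*N⌋₊:ℝ) + n < (⌊q*N⌋₊:ℝ) := by nlinarith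
  have : ⌊p*N⌋₊ + n < ⌊q*N⌋₊ := by exact_mod_cast this
  omega

end

lemma density_interval (E : Set ℝ) (hE : E ⊆ Icc 0 1) (hpos : 0 < volume E)
    {ε : ℝ} (hε : 0 < ε) (hε1 : ε ≤ 1) :
    ∃ a b : ℝ, 0 ≤ a ∧ a < b ∧ b ≤ 1 ∧
      ∀ s t : ℝ, a ≤ s → s ≤ t → t ≤ b → E ∩ Ioo s t = ∅ → t - s ≤ ε * (b - a) := by
  have hres : volume.restrict E ≠ 0 := by
    intro h
    have : volume E = 0 := by
      have := congrArg (fun μ : Measure ℝ => μ univ) h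
      simpa [Measure.restrict_apply_univ] using this
    exact absurd this hpos.ne'
  have hne : (MeasureTheory.ae (volume.restrict E)).NeBot := MeasureTheory.ae_neBot.2 hres
  have h01 : ∀ᵐ x ∂(volume.restrict E), x ∈ Icc (0:ℝ) 1 := by
    rw [MeasureTheory.ae_iff]
    have hmeas : MeasurableSet {x : ℝ | ¬ x ∈ Icc (0:ℝ) 1} := measurableSet_Icc.compl
    rw [Measure.restrict_apply hmeas]
    have : {x : ℝ | ¬ x ∈ Icc (0:ℝ) 1} ∩ E = ∅ := by
      ext x; simp only [mem_inter_iff, mem_setOf_eq, mem_empty_iff_false, iff_false]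
      rintro ⟨hx, hxE⟩; exact hx (hE hxE)
    rw [this]; exact measure_empty
  obtain ⟨x, hx, hx01⟩ := ((Besicovitch.ae_tendsto_measure_inter_div volume E).and h01).exists
  have hlt1 : ENNReal.ofReal (1 - ε/2) < 1 := ENNReal.ofReal_lt_one.2 (by linarith)
  have hev1 : ∀ᶠ r in nhdsWithin 0 (Ioi (0:ℝ)),
      ENNReal.ofReal (1 - ε/2) < volume (E ∩ Metric.closedBall x r) / volume (Metric.closedBall x r) :=
    hx.eventually (eventually_gt_nhds hlt1)
  have hev2 : ∀ᶠ r in nhdsWithin 0 (Ioi (0:ℝ)), r ∈ Ioc (0:ℝ) 1 :=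
    Ioc_mem_nhdsGT_of_mem ⟨le_refl 0, zero_lt_one⟩
  obtain ⟨r, hr1, hr0, hrle⟩ := (hev1.and hev2).exists
  set a := max (x - r) 0 with hadef
  set b := min (x + r) 1 with hbdef
  have ha0 : 0 ≤ a := le_max_right _ _
  have hb1 : b ≤ 1 := min_le_right _ _
  have hrba : a + r ≤ b := by
    rw [hadef, hbdef]
    rcases max_cases (x - r) 0 with ⟨h1,h2⟩|⟨h1,h2⟩ <;> rcases min_cases (x + r) 1 with ⟨h3,h4⟩|⟨h3,h4⟩ <;>
      rw [h1, h3] <;> linarith [hx01.1, hx01.2]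
  have hab : a < b := lt_of_lt_of_le (by linarith) hrba
  have hba2r : b - a ≤ 2 * r := by
    have h1 : x - r ≤ a := le_max_left _ _
    have h2 : b ≤ x + r := min_le_left _ _
    linarith
  have hEcap : E ∩ Metric.closedBall x r = E ∩ Icc a b := by
    ext e
    simp only [mem_inter_iff, Metric.mem_closedBall, Real.dist_eq, abs_le, mem_Icc]
    constructor
    · rintro ⟨he, h1, h2⟩
      exact ⟨he, max_le (by linarith) (hE he).1, le_min (by linarith) (hE he).2⟩
    · rintro ⟨he, h1, h2⟩
      have ha' : x - r ≤ a := le_max_left _ _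
      have hb' : b ≤ x + r := min_le_left _ _
      exact ⟨he, by constructor <;> linarith⟩
  have hball : volume (Metric.closedBall x r) = ENNReal.ofReal (2 * r) := by
    rw [Real.volume_closedBall]
  have hlow : ENNReal.ofReal (1 - ε/2) * ENNReal.ofReal (2*r) < volume (E ∩ Icc a b) := by
    rw [← hEcap, ← hball]
    exact ENNReal.mul_lt_of_lt_div hr1
  refine ⟨a, b, ha0, hab, hb1, fun s t hs hst ht hemp => ?_⟩
  have hsub : E ∩ Icc a b ⊆ Icc a s ∪ Icc t b := by
    rintro e ⟨heE, he1, he2⟩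
    rcases le_or_gt e s with h | h
    · exact Or.inl ⟨he1, h⟩
    rcases lt_or_ge e t with h' | h'
    · exfalso
      have hmem : e ∈ E ∩ Ioo s t := ⟨heE, h, h'⟩
      rw [hemp] at hmem
      exact hmem
    · exact Or.inr ⟨h', he2⟩
  have hup : volume (E ∩ Icc a b) ≤ ENNReal.ofReal ((s - a) + (b - t)) := by
    calc volume (E ∩ Icc a b) ≤ volume (Icc a s ∪ Icc t b) := measure_mono hsub
      _ ≤ volume (Icc a s) + volume (Icc t b) := measure_union_le _ _
      _ = ENNReal.ofReal (s - a) + ENNReal.ofReal (b - t) := by rw [Real.volume_Icc, Real.volume_Icc]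
      _ = ENNReal.ofReal ((s - a) + (b - t)) := by
          rw [ENNReal.ofReal_add (by linarith) (by linarith)]
  have hreal : (1 - ε/2) * (2*r) < (s - a) + (b - t) := by
    have h := lt_of_lt_of_le hlow hup
    rw [← ENNReal.ofReal_mul (by linarith)] at h
    exact (ENNReal.ofReal_lt_ofReal_iff_of_nonneg (by nlinarith)).1 h
  have h3 : ε*r ≤ ε*(b-a) := mul_le_mul_of_nonneg_left (by linarith) hε.le
  nlinarith


lemma small_gap_exists (A : Set SN) (f g : ℕ → ℕ) (hInf : InfInterval (↑f : SN) ↑g)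
    (hlam : 0 < lam A ↑f ↑g) {δ : ℝ} (hδ : 0 < δ) :
    ∃ c' d' : SN, (↑f : SN) ≤ c' ∧ c' ≤ d' ∧ d' ≤ ↑g ∧ InfInterval c' d' ∧ gap A c' d' ≤ δ := by
  set c : SN := ↑f
  set d : SN := ↑g
  set E : Set ℝ := stI c d '' (A ∩ Set.Icc c d) with hEdef
  have hE1 : E ⊆ Icc 0 1 := by
    rintro e ⟨x, ⟨hxA, hxI⟩, rfl⟩
    exact stI_mem01 hInf hxI.1 hxI.2
  have hEpos : 0 < volume E := by
    by_contra h
    push_neg at h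
    have : volume E = 0 := le_antisymm (by simpa using h) (zero_le)
    rw [lam, ← hEdef, this] at hlam
    norm_num at hlam
  set ε : ℝ := min δ 1 with hεdef
  have hε : 0 < ε := lt_min hδ zero_lt_one
  have hε1 : ε ≤ 1 := min_le_right _ _
  obtain ⟨a, b, ha0, hab, hb1, hkey⟩ := density_interval E hE1 hEpos hε hε1
  set c' : SN := ↑(pt f g a) with hc'def
  set d' : SN := ↑(pt f g b) with hd'def
  have hcc' : c ≤ c' := pt_ge
  have hc'd' : c' ≤ d' := pt_mono hab.le
  have hd'd : d' ≤ d := pt_le hInf hb1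
  have hInf' : InfInterval c' d' := pt_inf hInf ha0 hab
  have hstc' : stI c d c' = a := (pt_isSt hInf ha0).st_eq
  have hstd' : stI c d d' = b := (pt_isSt hInf (le_trans ha0 hab.le)).st_eq
  refine ⟨c', d', hcc', hc'd', hd'd, hInf', ?_⟩
  apply Real.sSup_le _ hδ.le
  rintro r ⟨hr0, u, v, hu, hv, huv, hdisj, hrle⟩
  -- bounds for u, v in [c, d]
  have hcu : c ≤ u := le_trans hcc' hu.1
  have hud : u ≤ d := le_trans hu.2 hd'd
  have hcv : c ≤ v := le_trans hcc' hv.1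
  have hvd : v ≤ d := le_trans hv.2 hd'd
  set su := stI c d u with hsudef
  set sv := stI c d v with hsvdef
  have hasu : a ≤ su := by rw [← hstc']; exact stI_mono hInf hcc' hu.1 hud
  have hsusv : su ≤ sv := stI_mono hInf hcu huv hvd
  have hsvb : sv ≤ b := by rw [← hstd']; exact stI_mono hInf hcv hv.2 (le_trans hd'd le_rfl)
  have hemp : E ∩ Ioo su sv = ∅ := by
    ext e
    simp only [mem_inter_iff, mem_empty_iff_false, iff_false, not_and]
    rintro ⟨x, ⟨hxA, hxI⟩, rfl⟩ ⟨h1, h2⟩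
    have hux : u < x := lt_of_stI_lt hInf hcu hud hxI.1 hxI.2 h1
    have hxv : x < v := lt_of_stI_lt hInf hxI.1 hxI.2 hcv hvd h2
    have : x ∈ Set.Icc u v ∩ A := ⟨⟨hux.le, hxv.le⟩, hxA⟩
    rw [hdisj] at this
    exact this
  have hgap : sv - su ≤ ε * (b - a) := hkey su sv hasu hsusv hsvb hemp
  -- now transfer to the hyperreal quotient
  have hD : toR d - toR c ≠ 0 := (sub_pos_of_inf hInf).ne'
  have hD' : toR d' - toR c' ≠ 0 := (sub_pos_of_inf hInf').ne'
  have hnum : Hyperreal.IsSt ((toR v - toR u) / (toR d - toR c)) (sv - su) := by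
    have h := (isSt_stI hInf hcv hvd).sub (isSt_stI hInf hcu hud)
    have heq : (toR v - toR c) / (toR d - toR c) - (toR u - toR c) / (toR d - toR c)
        = (toR v - toR u) / (toR d - toR c) := by ring
    rwa [heq] at h
  have hden : Hyperreal.IsSt ((toR d' - toR c') / (toR d - toR c)) (b - a) := by
    have h := (pt_isSt hInf (le_trans ha0 hab.le)).sub (pt_isSt hInf ha0)
    have heq : (toR d' - toR c) / (toR d - toR c) - (toR c' - toR c) / (toR d - toR c)
        = (toR d' - toR c') / (toR d - toR c) := by ring
    rwa [heq] at h
  have hq : Hyperreal.IsSt ((toR v - toR u) / (toR d' - toR c')) ((sv - su) / (b - a)) := by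
    have heq : (toR v - toR u) / (toR d' - toR c')
        = ((toR v - toR u) / (toR d - toR c)) / ((toR d' - toR c') / (toR d - toR c)) := by
      field_simp
    rw [heq]
    refine hnum.map₂ hden ?_
    have hba : b - a ≠ 0 := sub_ne_zero.2 hab.ne'
    exact (continuous_fst.continuousAt).div (continuous_snd.continuousAt) (by simpa using hba)
  have hrg : r ≤ (sv - su) / (b - a) := (Hyperreal.isSt_refl_real r).le hq hrle
  have : (sv - su) / (b - a) ≤ ε := by
    rw [div_le_iff₀ (by linarith)]
    linarith
  calc r ≤ (sv - su) / (b - a) := hrg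
    _ ≤ ε := this
    _ ≤ δ := min_le_left _ _

theorem stmt_5 (A : Set SN) (y z : SN) (hA : InternalSet A) (hI : InfInterval y z)
    (hIM : IMOn A y z) :
    (∃ c d : SN, y ≤ c ∧ c ≤ d ∧ d ≤ z ∧ InfInterval c d ∧ NontrivialIMOn A c d) ↔
      (∃ c d : SN, y ≤ c ∧ c ≤ d ∧ d ≤ z ∧ InfInterval c d ∧ 0 < lam A c d) := by
  constructor
  · rintro ⟨c, d, hyc, hcd, hdz, hInfcd, hIMcd, hsmall⟩
    obtain ⟨δ0, hδ0, hprop⟩ := hIMcd (1/2) (by norm_num)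
    obtain ⟨c', d', h1, h2, h3, hInf', hgap⟩ := hsmall δ0 hδ0
    refine ⟨c', d', le_trans hyc h1, h2, le_trans h3 hdz, hInf', ?_⟩
    have := hprop c' d' h1 h2 h3 hInf' hgap
    linarith
  · rintro ⟨c, d, hyc, hcd, hdz, hInfcd, hlam⟩
    obtain ⟨f, hf⟩ := Quotient.exists_rep c
    obtain ⟨g, hg⟩ := Quotient.exists_rep d
    have hc : (↑f : SN) = c := hf
    have hd : (↑g : SN) = d := hg
    subst hc
    subst hd
    refine ⟨↑f, ↑g, hyc, hcd, hdz, hInfcd, ?_, ?_⟩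
    · intro ε hε
      obtain ⟨δ0, hδ0, hprop⟩ := hIM ε hε
      exact ⟨δ0, hδ0, fun c' d' h1 h2 h3 hI' hg' =>
        hprop c' d' (le_trans hyc h1) h2 (le_trans h3 hdz) hI' hg'⟩
    · intro δ hδ
      obtain ⟨c', d', h1, h2, h3, hI', hgap⟩ := small_gap_exists A f g hInfcd hlam hδ
      exact ⟨c', d', h1, h2, h3, hI', hgap⟩
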